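/- For all natural numbers m and n, the normalized shifted Legendre polynomials are orthonormal on [0,1]: ∫₀¹ L_m(x) L_n(x) dx equals 1 if m = n and 0 otherwise. -/

import Mathlib

open MeasureTheory ProbabilityTheory Real Filter

/-- Classical Legendre polynomial via Rodrigues' formula. -/
noncomputable def legP (n : ℕ) (y : ℝ) : ℝ :=
  (1 / ((2 : ℝ) ^ n * (Nat.factorial n : ℝ))) *
    iteratedDeriv n (fun t : ℝ => (t ^ 2 - 1) ^ n) y

/-- Normalized shifted Legendre polynomial on [0,1]. -/
noncomputable def legL (n : ℕ) (x : ℝ) : ℝ :=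
  Real.sqrt (2 * (n : ℝ) + 1) * legP n (2 * x - 1)


section LegendreAux

open Polynomial intervalIntegral

noncomputable def legR (n : ℕ) : Polynomial ℝ := ((X : Polynomial ℝ) ^ 2 - 1) ^ n

lemma eval_iteratedDeriv (p : Polynomial ℝ) (k : ℕ) :
    iteratedDeriv k (fun t : ℝ => p.eval t) = fun y => (derivative^[k] p).eval y := by
  induction k with
  | zero => norm_num [iteratedDeriv]
  | succ k ih =>
    rw [iteratedDeriv_succ, ih, Function.iterate_succ_apply']
    funext y
    exact Polynomial.deriv _

lemma legP_eval (n : ℕ) (y : ℝ) :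
    legP n y = (1 / ((2:ℝ)^n * n.factorial)) * (derivative^[n] (legR n)).eval y := by
  have : (fun t : ℝ => (t ^ 2 - 1) ^ n) = fun t : ℝ => (legR n).eval t := by
    funext t; simp [legR]
  rw [legP, this, eval_iteratedDeriv]

-- dvd lemma
lemma pow_dvd_iterate_derivative {a : ℝ} {p : Polynomial ℝ} {n : ℕ} (h : (X - C a) ^ n ∣ p)
    (k : ℕ) : (X - C a) ^ (n - k) ∣ derivative^[k] p := by
  induction k generalizing p n with
  | zero => simpa using h
  | succ k ih =>
    rw [Function.iterate_succ_apply]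
    have step : (X - C a) ^ (n - 1) ∣ derivative p := by
      obtain ⟨s, rfl⟩ := h
      rw [derivative_mul, derivative_pow]
      rcases n with _ | n
      · simp
      · simp only [Nat.add_sub_cancel]
        apply dvd_add
        · exact ((dvd_mul_left _ _).mul_right _).mul_right _
        · exact (pow_dvd_pow _ (by omega)).mul_right _
    have := ih step
    have hle : n - 1 - k = n - (k+1) := by omega
    rwa [hle] at this

lemma legR_eq (n : ℕ) : legR n = (X - C 1) ^ n * (X - C (-1)) ^ n := by
  rw [legR, ← mul_pow]
  congr 1
  simp only [map_neg, map_one]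
  ring

lemma eval_vanish {n k : ℕ} (hk : k < n) (a : ℝ) (ha : (X - C a) ^ n ∣ legR n) :
    (derivative^[k] (legR n)).eval a = 0 := by
  have h1 := pow_dvd_iterate_derivative ha k
  have h2 : (X - C a) ∣ derivative^[k] (legR n) :=
    (dvd_pow_self _ (by omega : n - k ≠ 0)).trans h1
  have := Polynomial.dvd_iff_isRoot.mp h2
  simpa [Polynomial.IsRoot] using this

lemma dvd_one (n : ℕ) : ((X : Polynomial ℝ) - C 1) ^ n ∣ legR n := ⟨_, legR_eq n⟩
lemma dvd_neg_one (n : ℕ) : ((X : Polynomial ℝ) - C (-1)) ^ n ∣ legR n :=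
  ⟨_, by rw [legR_eq n, mul_comm]⟩

lemma key (n : ℕ) (p : Polynomial ℝ) : ∀ k, k ≤ n →
    ∫ y in (-1:ℝ)..1, p.eval y * (derivative^[n] (legR n)).eval y
      = (-1:ℝ)^k * ∫ y in (-1:ℝ)..1,
          (derivative^[k] p).eval y * (derivative^[n-k] (legR n)).eval y := by
  intro k
  induction k with
  | zero => norm_num
  | succ k ih =>
    intro hk
    rw [ih (by omega)]
    have hnk : n - k = (n - (k+1)) + 1 := by omega
    have hder : derivative^[n-k] (legR n) = derivative (derivative^[n-(k+1)] (legR n)) := by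
      rw [hnk, Function.iterate_succ_apply']
    have hibp := intervalIntegral.integral_mul_deriv_eq_deriv_mul
      (u := fun y => (derivative^[k] p).eval y)
      (v := fun y => (derivative^[n-(k+1)] (legR n)).eval y)
      (u' := fun y => (derivative^[k+1] p).eval y)
      (v' := fun y => (derivative^[n-k] (legR n)).eval y)
      (a := (-1:ℝ)) (b := 1)
      (fun x _ => by
        rw [Function.iterate_succ_apply']
        exact Polynomial.hasDerivAt _ x)
      (fun x _ => by
        rw [hder]
        exact Polynomial.hasDerivAt _ x)
      ((Polynomial.continuous _).intervalIntegrable _ _)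
      ((Polynomial.continuous _).intervalIntegrable _ _)
    have e1 : (derivative^[n-(k+1)] (legR n)).eval 1 = 0 := eval_vanish (by omega) 1 (dvd_one n)
    have e2 : (derivative^[n-(k+1)] (legR n)).eval (-1) = 0 := eval_vanish (by omega) (-1) (dvd_neg_one n)
    rw [hibp]
    simp only [e1, e2, mul_zero, zero_sub]
    ring

lemma legR_natDegree (n : ℕ) : (legR n).natDegree = 2 * n := by
  have h2 : ((X : Polynomial ℝ) ^ 2 - 1).natDegree = 2 := by
    have := Polynomial.natDegree_X_pow_sub_C (R := ℝ) (n := 2) (r := 1)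
    simpa using this
  rw [legR, Polynomial.natDegree_pow, h2, mul_comm]

lemma legR_monic (n : ℕ) : (legR n).Monic := by
  have h : ((X : Polynomial ℝ) ^ 2 - 1).Monic := by
    have := Polynomial.monic_X_pow_sub_C (1:ℝ) (by norm_num : 2 ≠ 0)
    simpa using this
  exact h.pow n

lemma top_deriv (n : ℕ) : derivative^[2 * n] (legR n) = C ((2 * n).factorial : ℝ) := by
  have hdeg : (derivative^[2*n] (legR n)).natDegree = 0 := by
    have h := Polynomial.natDegree_iterate_derivative (legR n) (2*n)
    rw [legR_natDegree] at h
    omega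
  rw [Polynomial.eq_C_of_natDegree_le_zero hdeg.le]
  congr 1
  rw [Polynomial.coeff_iterate_derivative]
  simp only [zero_add, Nat.descFactorial_self]
  have : (legR n).coeff (2 * n) = 1 := by
    have := (legR_monic n).coeff_natDegree
    rwa [legR_natDegree] at this
  rw [this]
  simp

lemma I_rec (n : ℕ) :
    (2*(n:ℝ)+3) * (∫ y in (-1:ℝ)..1, (1 - y^2)^(n+1))
      = (2*(n:ℝ)+2) * ∫ y in (-1:ℝ)..1, (1 - y^2)^n := by
  have hcont : ∀ k : ℕ, Continuous fun y : ℝ => (1 - y^2)^k := by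
    intro k; fun_prop
  have hderiv : ∀ y : ℝ, HasDerivAt (fun y : ℝ => y * (1-y^2)^(n+1))
      ((2*(n:ℝ)+3) * (1-y^2)^(n+1) - (2*(n:ℝ)+2) * (1-y^2)^n) y := by
    intro y
    have h0 : HasDerivAt (fun y : ℝ => 1 - y^2) (-(2*y)) y := by
      simpa using ((hasDerivAt_pow 2 y).const_sub 1)
    have h1 : HasDerivAt (fun y : ℝ => (1-y^2)^(n+1))
        ((↑(n+1)) * (1-y^2)^n * (-(2*y))) y := by
      simpa using h0.fun_pow (n+1)
    have h2 : HasDerivAt (fun y : ℝ => id y * (1-y^2)^(n+1))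
        (1 * (1-y^2)^(n+1) + id y * ((↑(n+1)) * (1-y^2)^n * (-(2*y)))) y :=
      (hasDerivAt_id y).fun_mul h1
    simp only [id_eq] at h2
    convert h2 using 1
    have hp : (1-y^2)^(n+1) = (1-y^2) * (1-y^2)^n := by ring
    rw [hp]
    push_cast
    ring
  have hint := intervalIntegral.integral_eq_sub_of_hasDerivAt
    (f := fun y : ℝ => y * (1-y^2)^(n+1))
    (f' := fun y : ℝ => (2*(n:ℝ)+3) * (1-y^2)^(n+1) - (2*(n:ℝ)+2) * (1-y^2)^n)
    (a := (-1:ℝ)) (b := 1)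
    (fun y _ => hderiv y)
    ((by fun_prop : Continuous fun y : ℝ => (2*(n:ℝ)+3) * (1-y^2)^(n+1) - (2*(n:ℝ)+2) * (1-y^2)^n).intervalIntegrable _ _)
  rw [intervalIntegral.integral_sub ((continuous_const.fun_mul (hcont (n+1))).intervalIntegrable _ _)
      ((continuous_const.fun_mul (hcont n)).intervalIntegrable _ _),
    intervalIntegral.integral_const_mul, intervalIntegral.integral_const_mul] at hint
  norm_num at hint
  linarith [hint]

lemma I_val (n : ℕ) : (∫ y in (-1:ℝ)..1, (1 - y^2)^n)
    = 2 * 4^n * (n.factorial : ℝ)^2 / ((2*n+1).factorial : ℝ) := by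
  induction n with
  | zero => norm_num
  | succ n ih =>
    have hrec := I_rec n
    have h3 : (2*(n:ℝ)+3) ≠ 0 := by positivity
    have hI : (∫ y in (-1:ℝ)..1, (1 - y^2)^(n+1))
        = (2*(n:ℝ)+2) * (∫ y in (-1:ℝ)..1, (1 - y^2)^n) / (2*(n:ℝ)+3) := by
      field_simp at hrec ⊢
      linarith [hrec]
    rw [hI, ih]
    have hfac : ((2*(n+1)+1).factorial : ℝ)
        = (2*(n:ℝ)+3) * ((2*(n:ℝ)+2) * ((2*n+1).factorial : ℝ)) := by
      have : 2*(n+1)+1 = (2*n+1) + 1 + 1 := by ring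
      rw [this, Nat.factorial_succ, Nat.factorial_succ]
      push_cast
      ring
    have hfn : ((n+1).factorial : ℝ) = ((n:ℝ)+1) * (n.factorial : ℝ) := by
      rw [Nat.factorial_succ]; push_cast; ring
    have h1 : ((2*n+1).factorial : ℝ) ≠ 0 := Nat.cast_ne_zero.mpr (Nat.factorial_ne_zero _)
    rw [hfac, hfn]
    field_simp
    ring

lemma offdiag {m n : ℕ} (h : m < n) :
    ∫ y in (-1:ℝ)..1, legP m y * legP n y = 0 := by
  simp only [legP_eval]
  rw [intervalIntegral.integral_congr (g := fun y =>
      (1 / ((2:ℝ)^m * m.factorial) * (1 / ((2:ℝ)^n * n.factorial))) *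
      ((derivative^[m] (legR m)).eval y * (derivative^[n] (legR n)).eval y))
      (fun y _ => by ring), intervalIntegral.integral_const_mul]
  rw [key n (derivative^[m] (legR m)) n le_rfl]
  have hz : derivative^[n] (derivative^[m] (legR m)) = 0 := by
    rw [← Function.iterate_add_apply]
    apply Polynomial.iterate_derivative_eq_zero
    rw [legR_natDegree]
    omega
  rw [hz]
  simp

lemma diag (n : ℕ) :
    ∫ y in (-1:ℝ)..1, legP n y * legP n y = 2 / (2*(n:ℝ)+1) := by
  simp only [legP_eval]
  rw [intervalIntegral.integral_congr (g := fun y =>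
      (1 / ((2:ℝ)^n * n.factorial))^2 *
      ((derivative^[n] (legR n)).eval y * (derivative^[n] (legR n)).eval y))
      (fun y _ => by ring), intervalIntegral.integral_const_mul]
  rw [key n (derivative^[n] (legR n)) n le_rfl]
  have hz : derivative^[n] (derivative^[n] (legR n)) = C ((2*n).factorial : ℝ) := by
    rw [← Function.iterate_add_apply]
    have : n + n = 2 * n := by ring
    rw [this, top_deriv]
  rw [hz]
  simp only [Nat.sub_self, Function.iterate_zero, id_eq, Polynomial.eval_C]
  have hR : ∀ y : ℝ, (legR n).eval y = (-1:ℝ)^n * (1 - y^2)^n := by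
    intro y
    rw [legR]
    simp only [Polynomial.eval_pow, Polynomial.eval_sub, Polynomial.eval_one,
      Polynomial.eval_ofNat, Polynomial.eval_X]
    rw [← mul_pow]
    congr 1
    ring
  rw [intervalIntegral.integral_congr (g := fun y =>
      ((2*n).factorial : ℝ) * ((-1:ℝ)^n * (1 - y^2)^n)) (fun y _ => by rw [hR]),
    intervalIntegral.integral_const_mul, intervalIntegral.integral_const_mul, I_val]
  have h1 : ((2*n+1).factorial : ℝ) = (2*(n:ℝ)+1) * ((2*n).factorial : ℝ) := by
    rw [Nat.factorial_succ]; push_cast; ring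
  have h2 : ((2*n).factorial : ℝ) ≠ 0 := Nat.cast_ne_zero.mpr (Nat.factorial_ne_zero _)
  have h3 : (n.factorial : ℝ) ≠ 0 := Nat.cast_ne_zero.mpr (Nat.factorial_ne_zero _)
  have h4 : (4:ℝ)^n = 2^n * 2^n := by rw [← mul_pow]; norm_num
  have h5 : (2:ℝ)^n ≠ 0 := by positivity
  have h6 : (2*(n:ℝ)+1) ≠ 0 := by positivity
  rw [h1, h4]
  have h8 : ((-1:ℝ))^(n*2) = 1 := by rw [pow_mul', neg_one_sq, one_pow]
  ring_nf
  simp only [h8]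
  field_simp
  ring_nf
  rw [← mul_pow]; norm_num


end LegendreAux

/-- The normalized shifted Legendre polynomials are orthonormal on [0,1]. -/
theorem legendre_orthonormal (m n : ℕ) :
    ∫ x in (0 : ℝ)..1, legL m x * legL n x = if m = n then 1 else 0 := by
  have shift : ∫ x in (0:ℝ)..1, legP m (2*x-1) * legP n (2*x-1)
      = (1/2) * ∫ y in (-1:ℝ)..1, legP m y * legP n y := by
    have h := intervalIntegral.integral_comp_mul_sub
      (fun y => legP m y * legP n y) (two_ne_zero) 1 (a := 0) (b := 1)
    norm_num at h
    exact h
  simp only [legL]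
  rw [intervalIntegral.integral_congr (g := fun x =>
      (Real.sqrt (2*(m:ℝ)+1) * Real.sqrt (2*(n:ℝ)+1)) * (legP m (2*x-1) * legP n (2*x-1)))
      (fun x _ => by ring), intervalIntegral.integral_const_mul, shift]
  by_cases h : m = n
  · subst h
    rw [diag, Real.mul_self_sqrt (by positivity), if_pos rfl]
    have : (2*(m:ℝ)+1) ≠ 0 := by positivity
    field_simp
  · rw [if_neg h]
    rcases Nat.lt_or_ge m n with hlt | hge
    · rw [offdiag hlt]; ring
    · have hlt : n < m := by omega
      rw [intervalIntegral.integral_congr (g := fun y => legP n y * legP m y)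
        (fun y _ => by ring), offdiag hlt]
      ring
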